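/- Let (E, ℛ, τ) satisfy conditions (i), (ii), (iii), define iteratively E_0 := E, ℛ_0 := ℛ, E_{k+1} := E(E_k, ℛ_k), ℛ_{k+1} := ℛ(E_k, ℛ_k) with the induced Γ-actions, and let Γ^(stab) be the subgroup of Γ generated by the union of the stabilizer groups Γ_e = {g ∈ Γ : τ_g(e) = e}, e ∈ E×. Then for every k ∈ ℕ and every e' ∈ E_k×, the stabilizer group Γ_{e'} = {g ∈ Γ : g·e' = e'} is contained in Γ^(stab). In particular, if Γ acts freely on E×, then Γ acts freely on E_k× for every k. -/

import Mathlib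

set_option linter.unusedSectionVars false

/-- A *semilattice with zero*: a commutative idempotent semigroup with an
absorbing element `0`. -/
class SemilatticeWithZero (E : Type) extends CommSemigroup E, Zero E where
  mul_idem : ∀ e : E, e * e = e
  zero_mul : ∀ e : E, 0 * e = 0

namespace IndRes

variable {E : Type} [SemilatticeWithZero E]

/-- `single e c`, viewed in the semigroup algebra `ℤ[E]`. -/
noncomputable def sgl (e : E) (c : ℤ) : MonoidAlgebra ℤ E := MonoidAlgebra.ofCoeff (Finsupp.single e c)

/-- Truncation map deleting the coefficient at `0`. -/
noncomputable def T (x : MonoidAlgebra ℤ E) : MonoidAlgebra ℤ E := x - sgl 0 (x.coeff 0)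

lemma sgl_apply_self (e : E) (c : ℤ) : (sgl e c).coeff e = c := Finsupp.single_eq_same

lemma sgl_apply_ne (e d : E) (c : ℤ) (h : e ≠ d) : (sgl e c).coeff d = 0 := Finsupp.single_eq_of_ne h.symm

lemma sgl_add (e : E) (c d : ℤ) : sgl e (c + d) = sgl e c + sgl e d := congrArg MonoidAlgebra.ofCoeff (Finsupp.single_add e c d)

lemma sgl_sub (e : E) (c d : ℤ) : sgl e (c - d) = sgl e c - sgl e d := congrArg MonoidAlgebra.ofCoeff (Finsupp.single_sub e c d)

lemma T_apply_zero (x : MonoidAlgebra ℤ E) : (T x).coeff 0 = 0 := by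
  show ((x - sgl 0 (x.coeff 0) : MonoidAlgebra ℤ E)).coeff 0 = 0
  rw [MonoidAlgebra.coeff_sub, Finsupp.sub_apply, sgl_apply_self, sub_self]

/-- `ℤ[E^×]`, realized as the additive subgroup of the semigroup algebra
`ℤ[E]` consisting of the elements whose coefficient at `0` vanishes; it is the free
`ℤ`-module with basis `E^× = E \ {0}`. -/
noncomputable def ZS (E : Type) [SemilatticeWithZero E] : AddSubgroup (MonoidAlgebra ℤ E) where
  carrier := {x | x.coeff 0 = 0}
  zero_mem' := rfl
  add_mem' := by
    intro a b ha hb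
    simp only [Set.mem_setOf_eq] at *
    rw [MonoidAlgebra.coeff_add, Finsupp.add_apply, ha, hb, add_zero]
  neg_mem' := by
    intro a ha
    simp only [Set.mem_setOf_eq] at *
    rw [MonoidAlgebra.coeff_neg, Finsupp.neg_apply, ha, neg_zero]

/-- The integral semigroup ring `ℤ[E^×]`. -/
abbrev ZE (E : Type) [SemilatticeWithZero E] : Type := ↥(ZS E)

lemma mem_ZS {x : MonoidAlgebra ℤ E} : x ∈ ZS E ↔ x.coeff 0 = 0 := Iff.rfl

lemma T_eq_self {x : MonoidAlgebra ℤ E} (h : x.coeff 0 = 0) : T x = x := by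
  simp [T, h, sgl]

lemma T_add (a b : MonoidAlgebra ℤ E) : T (a + b) = T a + T b := by
  unfold T
  rw [show ((a + b).coeff 0) = a.coeff 0 + b.coeff 0 from Finsupp.add_apply a.coeff b.coeff 0, sgl_add]
  abel

lemma T_sub_sgl (x : MonoidAlgebra ℤ E) (m : ℤ) : T (x - sgl 0 m) = T x := by
  unfold T
  have h : ((x - sgl 0 m : MonoidAlgebra ℤ E)).coeff 0 = x.coeff 0 - m := by
    rw [MonoidAlgebra.coeff_sub, Finsupp.sub_apply, sgl_apply_self]
  rw [h, sgl_sub]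
  abel

lemma single_zero_mul (c : ℤ) (b : MonoidAlgebra ℤ E) :
    (sgl 0 c) * b = sgl 0 (((sgl 0 c * b : MonoidAlgebra ℤ E)).coeff 0) := by
  classical
  ext d
  by_cases hd : d = 0
  · subst hd; rw [sgl_apply_self]
  · rw [sgl_apply_ne 0 d _ (Ne.symm hd)]
    by_contra h
    have hmem : d ∈ ((sgl (0:E) c) * b).coeff.support := Finsupp.mem_support_iff.mpr h
    have h2 := MonoidAlgebra.support_coeff_mul_subset (sgl (0:E) c) b hmem
    rw [Finset.mem_mul] at h2
    obtain ⟨a, ha, b', _, hab⟩ := h2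
    have ha' : a = 0 := by
      have := Finsupp.support_single_subset (ha : a ∈ (Finsupp.single (0:E) c).support)
      simpa using this
    exact hd (by rw [← hab, ha', SemilatticeWithZero.zero_mul])

lemma T_mul_left (a b : MonoidAlgebra ℤ E) : T (T a * b) = T (a * b) := by
  have h1 : T a * b = a * b - (sgl 0 (a.coeff 0)) * b := by rw [T, sub_mul]
  rw [h1, single_zero_mul, T_sub_sgl]

lemma T_mul_right (a b : MonoidAlgebra ℤ E) : T (a * T b) = T (a * b) := by
  rw [mul_comm a (T b), T_mul_left, mul_comm]

noncomputable instance : Mul (ZE E) :=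
  ⟨fun x y => ⟨T (x.1 * y.1), T_apply_zero _⟩⟩

lemma ZE.val_mul (x y : ZE E) : (x * y).1 = T (x.1 * y.1) := rfl

noncomputable instance : NonUnitalCommRing (ZE E) :=
  { (inferInstance : AddCommGroup (ZE E)) with
    mul := (· * ·)
    left_distrib := by
      intro x y z
      apply Subtype.ext
      show T (x.1 * (y.1 + z.1)) = T (x.1 * y.1) + T (x.1 * z.1)
      rw [mul_add, T_add]
    right_distrib := by
      intro x y z
      apply Subtype.ext
      show T ((x.1 + y.1) * z.1) = T (x.1 * z.1) + T (y.1 * z.1)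
      rw [add_mul, T_add]
    zero_mul := by
      intro x
      apply Subtype.ext
      show T ((0 : MonoidAlgebra ℤ E) * x.1) = 0
      rw [zero_mul]
      simp [T, sgl]
    mul_zero := by
      intro x
      apply Subtype.ext
      show T (x.1 * (0 : MonoidAlgebra ℤ E)) = 0
      rw [mul_zero]
      simp [T, sgl]
    mul_assoc := by
      intro x y z
      apply Subtype.ext
      show T (T (x.1 * y.1) * z.1) = T (x.1 * T (y.1 * z.1))
      rw [T_mul_left, T_mul_right, mul_assoc]
    mul_comm := by
      intro x y
      apply Subtype.ext
      show T (x.1 * y.1) = T (y.1 * x.1)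
      rw [mul_comm] }

/-- The canonical image of `e ∈ E` in `ℤ[E^×]`: the basis element `e` if `e ≠ 0`,
and `0` if `e = 0`. -/
noncomputable def elt (e : E) : ZE E := ⟨T (sgl e 1), T_apply_zero _⟩

/-- Product of a (nonempty) finite family in a commutative non-unital ring, computed inside
the unitization.  For a nonempty index set this is the iterated product. -/
noncomputable def nprod {ι A : Type} [NonUnitalCommRing A] (s : Finset ι) (f : ι → A) : A :=
  (∏ j ∈ s, (Unitization.inr (f j) : Unitization ℤ A)).snd

/-- The join `⋁_{j ∈ J} x_j = ∑_{∅ ≠ J' ⊆ J} (-1)^{|J'|+1} ∏_{j ∈ J'} x_j`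
of a finite family of idempotents of a commutative non-unital ring. -/
noncomputable def rjoin {ι A : Type} [NonUnitalCommRing A] (s : Finset ι) (f : ι → A) : A :=
  ∑ t ∈ s.powerset.filter (fun t => t.Nonempty), ((-1 : ℤ) ^ (t.card + 1)) • nprod t f

/-- The join `⋁_{j ∈ J} e_j ∈ ℤ[E^×]` of a finite family of elements of `E`:
`∑_{∅ ≠ J' ⊆ J} (-1)^{|J'|+1} ∏_{j ∈ J'} e_j`, where a product whose value in `E`
is `0` contributes `0`. -/
noncomputable def join {ι : Type} (s : Finset ι) (e : ι → E) : ZE E :=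
  rjoin s (fun j => elt (e j))

/-- Iterated product of a nonempty list in a semigroup with zero (the value on the
empty list is the junk value `0`). -/
def listProd : List E → E
  | [] => 0
  | [a] => a
  | a :: b :: l => a * listProd (b :: l)

/-- The product `∏_{j ∈ s} f j ∈ E` of a (nonempty) finite family. -/
noncomputable def eprod {ι : Type} (s : Finset ι) (f : ι → E) : E :=
  listProd (s.toList.map f)

/-- The support `E(x)` of `x ∈ ℤ[E^×]`: the finite set of elements of `E^×` appearing
with a nonzero coefficient in the reduced form of `x`. -/
noncomputable def supp (x : ZE E) : Finset E := x.1.coeff.support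

section Action

variable {Γ : Type} [Group Γ] [MulAction Γ E]

/-- The induced action of `g ∈ Γ` on `ℤ[E^×]`: the `ℤ`-linear map sending a basis
element `e ∈ E^×` to `g • e`.  (When the action fixes `0` — which is the case for an
action by semigroup automorphisms fixing `0` — the truncation `T` is a no-op, and this
is the automorphism of `ℤ[E^×]` induced by `τ_g`.) -/
noncomputable def act (g : Γ) (x : ZE E) : ZE E :=
  ⟨T (MonoidAlgebra.ofCoeff (Finsupp.mapDomain (fun e : E => g • e) x.1.coeff)), T_apply_zero _⟩

end Action



attribute [local instance] Classical.propDecidable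

variable {E : Type} [SemilatticeWithZero E]

/-- A Γ-semilattice structure: the group acts by semigroup automorphisms fixing `0`. -/
def IsGammaSL (Γ E : Type) [Group Γ] [SemilatticeWithZero E] [MulAction Γ E] : Prop :=
  (∀ (g : Γ) (x y : E), g • (x * y) = (g • x) * (g • y)) ∧ (∀ g : Γ, g • (0 : E) = 0)

/-- The set `E_φ`. -/
def Ephi {D : Type} [NonUnitalCommRing D] (φ : ZE E →ₙ+* D) : Set (ZE E) :=
  { x | ∃ (e : E) (J : Finset E), e ≠ 0 ∧ (∀ f ∈ J, f ≠ 0 ∧ f * e = f ∧ f ≠ e) ∧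
      x = elt e - join J (fun f => f) ∧
      φ (elt e) = rjoin J (fun f => φ (elt f)) }

/-- `R` is a finite cover for `e ∈ E^×`. -/
def IsCover (e : E) (R : Finset E) : Prop :=
  (∀ f ∈ R, f ≠ 0 ∧ f * e = f) ∧
  ∀ f' : E, f' ≠ 0 → f' * e = f' → ∃ f ∈ R, f' * f ≠ 0

/-- `ℛ` is a collection of finite covers for `E`. -/
def CovSystem (ℛ : E → Set (Finset E)) : Prop :=
  ∀ e : E, e ≠ 0 → ∀ R ∈ ℛ e, IsCover e R

/-- Condition (i). -/
def CondI (ℛ : E → Set (Finset E)) : Prop :=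
  ∀ d e : E, d ≠ 0 → e ≠ 0 → d * e ≠ 0 → ∀ R ∈ ℛ e,
    d * e ∈ (R.image (fun f => d * f)).erase 0 ∨ (R.image (fun f => d * f)).erase 0 ∈ ℛ (d * e)

/-- Condition (ii). -/
def CondII (ℛ : E → Set (Finset E)) : Prop :=
  ∀ e : E, e ≠ 0 → ∀ r : ℕ, 0 < r → ∀ Rs : Fin r → Finset E,
    Function.Injective Rs → (∀ i, Rs i ∈ ℛ e) → ∀ ε : Fin r → E,
    (∀ i, ε i ∈ supp (join (Rs i) (fun f => f))) → ∀ j : Fin r,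
      (if r = 1 then e else eprod (Finset.univ.erase j) ε) ≠ 0 →
      eprod Finset.univ ε * (if r = 1 then e else eprod (Finset.univ.erase j) ε)
          = eprod Finset.univ ε ∧
      eprod Finset.univ ε ≠ (if r = 1 then e else eprod (Finset.univ.erase j) ε)

/-- Condition (iii). -/
def CondIII (Γ : Type) [Group Γ] [MulAction Γ E] (ℛ : E → Set (Finset E)) : Prop :=
  ∀ (g : Γ) (e : E), e ≠ 0 →
    (fun R : Finset E => R.image (fun f => g • f)) '' (ℛ e) = ℛ (g • e)

/-- `e(𝒮) = ∏_{R ∈ 𝒮} (e - ⋁R) ∈ ℤ[E^×]`. -/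
noncomputable def eS (e : E) (S : Finset (Finset E)) : ZE E :=
  nprod S (fun R => elt e - join R (fun f => f))

/-- `E(E,ℛ) = {e(𝒮) : e ∈ E^×, 𝒮 ⊆ ℛ(e) nonempty finite} ∪ {0} ⊆ ℤ[E^×]`. -/
def EER (ℛ : E → Set (Finset E)) : Set (ZE E) :=
  {x | ∃ (e : E) (S : Finset (Finset E)), e ≠ 0 ∧ S.Nonempty ∧ ↑S ⊆ ℛ e ∧ x = eS e S} ∪ {0}

/-- `R(𝒮,R̃) = {e(𝒮 ∪ {R̃})} ∪ {f ⬝ e(𝒮) : f ∈ R̃, f ⬝ e(𝒮) ≠ 0}`. -/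
noncomputable def RSR (e : E) (S : Finset (Finset E)) (Rt : Finset E) : Finset (ZE E) :=
  insert (eS e (insert Rt S)) ((Rt.image (fun f => elt f * eS e S)).erase 0)

/-- The collection of finite covers `ℛ(E,ℛ)` on `E(E,ℛ)`, assigning to an element
`x = e(𝒮)` of `E(E,ℛ)^×` the covers `R(𝒮,R̃)`, `R̃ ∈ ℛ(e) ∖ 𝒮` (over all ways of
presenting `x` in the form `e(𝒮)`). -/
def RER (ℛ : E → Set (Finset E)) (x : ZE E) : Set (Finset (ZE E)) :=
  {C | ∃ (e : E) (S : Finset (Finset E)) (Rt : Finset E),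
        e ≠ 0 ∧ S.Nonempty ∧ ↑S ⊆ ℛ e ∧ Rt ∈ ℛ e ∧ Rt ∉ S ∧ x = eS e S ∧ C = RSR e S Rt}

/-- The `ℤ`-linear map `ℤ[E₁^×] → ℤ[E₂^×]` induced by a map `θ` from `E₁` to `ℤ[E₂^×]`,
sending a basis element `e' ∈ E₁^×` to `θ e'`. -/
noncomputable def indMap {E₁ E₂ : Type} [SemilatticeWithZero E₁] [SemilatticeWithZero E₂]
    (θ : E₁ → ZE E₂) : ZE E₁ →ₗ[ℤ] ZE E₂ :=
  (Finsupp.linearCombination ℤ θ).comp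
    ((MonoidAlgebra.coeffLinearEquiv ℤ).toLinearMap.comp ((ZS E₁).subtype.toIntLinearMap))

/-- `(E₁, ℛ₁, θ)` is a realization of the construction `(E(E,ℛ), ℛ(E,ℛ))`:
`θ` identifies the abstract Γ-semilattice `E₁` with `E(E,ℛ) ⊆ ℤ[E^×]` (equivariantly,
multiplicatively and preserving `0`), and `ℛ₁` corresponds to `ℛ(E,ℛ)` under this
identification. -/
def Realizes {Γ E E₁ : Type} [Group Γ] [SemilatticeWithZero E] [MulAction Γ E]
    [SemilatticeWithZero E₁] [MulAction Γ E₁]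
    (ℛ : E → Set (Finset E)) (ℛ₁ : E₁ → Set (Finset E₁)) (θ : E₁ → ZE E) : Prop :=
  Function.Injective θ ∧ Set.range θ = EER ℛ ∧ θ 0 = 0 ∧
  (∀ x y : E₁, θ (x * y) = θ x * θ y) ∧
  (∀ (g : Γ) (x : E₁), θ (g • x) = act g (θ x)) ∧
  (∀ e' : E₁, e' ≠ 0 → ∀ C : Finset E₁, C ∈ ℛ₁ e' ↔ C.image θ ∈ RER ℛ (θ e'))

/-! ### Auxiliary lemmas for the proof of Statement 16 -/

section Aux

lemma T_apply_ne (x : MonoidAlgebra ℤ E) {d : E} (hd : d ≠ 0) : (T x).coeff d = x.coeff d := by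
  show (x - sgl 0 (x.coeff 0) : MonoidAlgebra ℤ E).coeff d = x.coeff d
  rw [MonoidAlgebra.coeff_sub, Finsupp.sub_apply, sgl_apply_ne 0 d _ (Ne.symm hd), sub_zero]

lemma val_mul_apply (x y : ZE E) {d : E} (hd : d ≠ 0) :
    ((x * y : ZE E) : MonoidAlgebra ℤ E).coeff d = ((x : MonoidAlgebra ℤ E) * (y : MonoidAlgebra ℤ E)).coeff d := by
  rw [ZE.val_mul]; exact T_apply_ne _ hd

lemma elt_val {e : E} (he : e ≠ 0) : ((elt e : ZE E) : MonoidAlgebra ℤ E) = MonoidAlgebra.single e 1 := by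
  show T (sgl e 1) = _
  unfold T
  rw [sgl_apply_ne e 0 1 he]
  show sgl e 1 - sgl 0 0 = _
  simp [sgl]

lemma elt_zero : (elt (0 : E)) = 0 := by
  apply Subtype.ext
  show T (sgl 0 1) = 0
  unfold T
  rw [sgl_apply_self]
  exact sub_self _

lemma elt_mul (a b : E) : (elt a * elt b : ZE E) = elt (a * b) := by
  apply Subtype.ext
  show T (T (sgl a 1) * T (sgl b 1)) = T (sgl (a * b) 1)
  rw [T_mul_left, T_mul_right]
  have : (sgl a 1 : MonoidAlgebra ℤ E) * sgl b 1 = sgl (a * b) 1 := by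
    show MonoidAlgebra.single a (1 : ℤ) * MonoidAlgebra.single b 1 = MonoidAlgebra.single (a * b) 1
    rw [MonoidAlgebra.single_mul_single, one_mul]
  rw [this]

section NprodRjoin

variable {ι A : Type} [NonUnitalCommRing A]

lemma nprod_singleton (j : ι) (f : ι → A) : nprod {j} f = f j := by
  simp [nprod]

lemma prod_inr_eq {s : Finset ι} (hs : s.Nonempty) (f : ι → A) :
    (∏ j ∈ s, (Unitization.inr (f j) : Unitization ℤ A)) = Unitization.inr (nprod s f) := by
  obtain ⟨a, ha⟩ := hs
  have hfst : (∏ j ∈ s, (Unitization.inr (f j) : Unitization ℤ A)).fst = 0 := by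
    have hmap := map_prod (Unitization.fstHom ℤ A).toRingHom
      (fun j => (Unitization.inr (f j) : Unitization ℤ A)) s
    have : (Unitization.fstHom ℤ A).toRingHom (∏ j ∈ s, (Unitization.inr (f j) : Unitization ℤ A))
        = (∏ j ∈ s, (Unitization.inr (f j) : Unitization ℤ A)).fst := rfl
    rw [this] at hmap
    rw [hmap]
    exact Finset.prod_eq_zero ha (by simp)
  conv_lhs => rw [← Unitization.inl_fst_add_inr_snd_eq
    (∏ j ∈ s, (Unitization.inr (f j) : Unitization ℤ A))]
  rw [hfst]
  simp [nprod]

lemma nprod_insert [DecidableEq ι] {a : ι} {s : Finset ι} (ha : a ∉ s) (hs : s.Nonempty) (f : ι → A) :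
    nprod (insert a s) f = f a * nprod s f := by
  unfold nprod
  rw [Finset.prod_insert ha, prod_inr_eq hs, ← Unitization.inr_mul, Unitization.snd_inr,
    Unitization.snd_inr]

lemma nprod_eq_zero {j : ι} {s : Finset ι} (hj : j ∈ s) {f : ι → A} (hf : f j = 0) :
    nprod s f = 0 := by
  unfold nprod
  rw [Finset.prod_eq_zero (f := fun j => (Unitization.inr (f j) : Unitization ℤ A)) hj
    (by rw [hf, Unitization.inr_zero])]
  simp

lemma rjoin_empty (f : ι → A) : rjoin (∅ : Finset ι) f = 0 := by
  unfold rjoin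
  rw [Finset.powerset_empty, Finset.filter_singleton]
  simp

lemma rjoin_insert [DecidableEq ι] {a : ι} {s : Finset ι} (ha : a ∉ s) (f : ι → A) :
    rjoin (insert a s) f = f a + rjoin s f - f a * rjoin s f := by
  have hdisj : Disjoint (s.powerset.filter (fun t => t.Nonempty))
      ((s.powerset.image (insert a)).filter (fun t => t.Nonempty)) := by
    rw [Finset.disjoint_left]
    intro t ht1 ht2
    obtain ⟨u, _, rfl⟩ := Finset.mem_image.mp (Finset.mem_filter.mp ht2).1
    have hsub := Finset.mem_powerset.mp (Finset.mem_filter.mp ht1).1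
    exact ha (hsub (Finset.mem_insert_self a u))
  have himg : (s.powerset.image (insert a)).filter (fun t => t.Nonempty)
      = s.powerset.image (insert a) := by
    apply Finset.filter_true_of_mem
    intro t ht
    obtain ⟨u, _, rfl⟩ := Finset.mem_image.mp ht
    exact Finset.insert_nonempty a u
  have hinj : ∀ u ∈ s.powerset, ∀ v ∈ s.powerset, insert a u = insert a v → u = v := by
    intro u hu v hv h
    have hau : a ∉ u := fun h' => ha (Finset.mem_powerset.mp hu h')
    have hav : a ∉ v := fun h' => ha (Finset.mem_powerset.mp hv h')
    rw [← Finset.erase_insert hau, ← Finset.erase_insert hav, h]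
  have step1 : rjoin (insert a s) f
      = rjoin s f + ∑ u ∈ s.powerset, ((-1 : ℤ) ^ ((insert a u).card + 1)) • nprod (insert a u) f := by
    unfold rjoin
    rw [Finset.powerset_insert, Finset.filter_union, Finset.sum_union hdisj, himg,
      Finset.sum_image hinj]
  have hterm : ∀ u ∈ s.powerset.filter (fun t => t.Nonempty),
      ((-1 : ℤ) ^ ((insert a u).card + 1)) • nprod (insert a u) f
        = - (((-1 : ℤ) ^ (u.card + 1)) • (f a * nprod u f)) := by
    intro u hu
    obtain ⟨hups, hune⟩ := Finset.mem_filter.mp hu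
    have hau : a ∉ u := fun h' => ha (Finset.mem_powerset.mp hups h')
    rw [nprod_insert hau hune, Finset.card_insert_of_notMem hau]
    have hpow : ((-1 : ℤ) ^ (u.card + 1 + 1)) = ((-1 : ℤ) ^ (u.card + 1)) * (-1) := pow_succ _ _
    rw [hpow, mul_comm ((-1 : ℤ) ^ (u.card + 1)) (-1 : ℤ), mul_smul, neg_one_zsmul]
  have step2 : ∑ u ∈ s.powerset, ((-1 : ℤ) ^ ((insert a u).card + 1)) • nprod (insert a u) f
      = f a - f a * rjoin s f := by
    rw [← Finset.sum_filter_add_sum_filter_not s.powerset (fun t => t.Nonempty)]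
    have h0 : s.powerset.filter (fun t => ¬ t.Nonempty) = {(∅ : Finset ι)} := by
      ext u
      simp only [Finset.mem_filter, Finset.mem_powerset, Finset.not_nonempty_iff_eq_empty,
        Finset.mem_singleton]
      constructor
      · rintro ⟨-, h⟩; exact h
      · rintro rfl; exact ⟨Finset.empty_subset s, rfl⟩
    have hne : ∑ u ∈ s.powerset.filter (fun t => t.Nonempty),
        ((-1 : ℤ) ^ ((insert a u).card + 1)) • nprod (insert a u) f
          = - (f a * rjoin s f) := by
      rw [Finset.sum_congr rfl hterm]
      rw [Finset.sum_neg_distrib]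
      congr 1
      unfold rjoin
      rw [Finset.mul_sum]
      exact Finset.sum_congr rfl fun u _ => (mul_smul_comm _ _ _).symm
    rw [hne, h0, Finset.sum_singleton]
    have hcard : ((insert a (∅ : Finset ι)).card + 1) = 2 := by simp
    rw [hcard]
    have : nprod (insert a (∅ : Finset ι)) f = f a := nprod_singleton a f
    rw [this]
    norm_num
    abel
  rw [step1, step2]
  abel

end NprodRjoin

/-- `x` is supported on elements below `e`. -/
def SB (e : E) (x : ZE E) : Prop := ∀ d : E, (x : MonoidAlgebra ℤ E).coeff d ≠ 0 → d * e = d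

lemma SB_zero (e : E) : SB e (0 : ZE E) := by
  intro d hd
  exact absurd rfl hd

lemma SB_elt {e a : E} (h : a * e = a) : SB e (elt a) := by
  intro d hd
  by_cases ha : a = 0
  · subst ha
    rw [elt_zero] at hd
    exact absurd rfl hd
  · rw [elt_val ha, MonoidAlgebra.coeff_single, Finsupp.single_apply] at hd
    by_cases had : a = d
    · subst had; exact h
    · rw [if_neg had] at hd; exact absurd rfl hd

lemma SB_add {e : E} {x y : ZE E} (hx : SB e x) (hy : SB e y) : SB e (x + y) := by
  intro d hd
  have : (x : MonoidAlgebra ℤ E).coeff d ≠ 0 ∨ (y : MonoidAlgebra ℤ E).coeff d ≠ 0 := by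
    by_contra h
    push_neg at h
    apply hd
    have hval : ((x + y : ZE E) : MonoidAlgebra ℤ E) = (x : MonoidAlgebra ℤ E) + y := rfl
    rw [hval, MonoidAlgebra.coeff_add, Finsupp.add_apply, h.1, h.2, add_zero]
  rcases this with h | h
  · exact hx d h
  · exact hy d h

lemma SB_neg {e : E} {x : ZE E} (hx : SB e x) : SB e (-x) := by
  intro d hd
  apply hx d
  intro h
  apply hd
  have hval : ((-x : ZE E) : MonoidAlgebra ℤ E) = -(x : MonoidAlgebra ℤ E) := rfl
  rw [hval, MonoidAlgebra.coeff_neg, Finsupp.neg_apply, h, neg_zero]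

lemma SB_sub {e : E} {x y : ZE E} (hx : SB e x) (hy : SB e y) : SB e (x - y) := by
  rw [sub_eq_add_neg]
  exact SB_add hx (SB_neg hy)

lemma SB_mul {e : E} {x y : ZE E} (hx : SB e x) (hy : SB e y) : SB e (x * y) := by
  intro d hd
  by_cases hd0 : d = 0
  · subst hd0; exact SemilatticeWithZero.zero_mul e
  rw [val_mul_apply x y hd0] at hd
  have hmem : d ∈ ((x : MonoidAlgebra ℤ E) * (y : MonoidAlgebra ℤ E)).coeff.support :=
    Finsupp.mem_support_iff.mpr hd
  have h2 := MonoidAlgebra.support_coeff_mul_subset (x : MonoidAlgebra ℤ E) (y : MonoidAlgebra ℤ E) hmem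
  rw [Finset.mem_mul] at h2
  obtain ⟨a, ha, b, hb, hab⟩ := h2
  have hae := hx a (Finsupp.mem_support_iff.mp ha)
  have hbe := hy b (Finsupp.mem_support_iff.mp hb)
  rw [← hab, mul_assoc, hbe]

lemma val_e_mul {e : E} (he : e ≠ 0) {x y : ZE E} (hx : SB e x) (hy : SB e y) :
    ((x * y : ZE E) : MonoidAlgebra ℤ E).coeff e
      = (x : MonoidAlgebra ℤ E).coeff e * (y : MonoidAlgebra ℤ E).coeff e := by
  have key : ∀ a : E, (x : MonoidAlgebra ℤ E).coeff a ≠ 0 → ∀ b : E,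
      (y : MonoidAlgebra ℤ E).coeff b ≠ 0 → a * b = e → a = e ∧ b = e := by
    intro a hxa b hyb hab
    have ha' := hx a hxa
    have hb' := hy b hyb
    have haab : a * (a * b) = a * b := by
      rw [← mul_assoc, SemilatticeWithZero.mul_idem]
    have hbab : b * (a * b) = a * b := by
      rw [mul_comm a b, ← mul_assoc, SemilatticeWithZero.mul_idem, mul_comm b a]
    constructor
    · -- a * e = a and a * e = e
      have h1 : a * e = e := by rw [← hab]; exact haab
      rw [← h1, ha']
    · have h1 : b * e = e := by rw [← hab]; exact hbab
      rw [← h1, hb']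
  rw [val_mul_apply x y he, MonoidAlgebra.coeff_mul]
  simp only [Finsupp.sum]
  have main : ∀ a ∈ (x : MonoidAlgebra ℤ E).coeff.support,
      (∑ b ∈ (y : MonoidAlgebra ℤ E).coeff.support,
        if a * b = e then (x : MonoidAlgebra ℤ E).coeff a * (y : MonoidAlgebra ℤ E).coeff b else 0)
      = if a = e then (x : MonoidAlgebra ℤ E).coeff e * (y : MonoidAlgebra ℤ E).coeff e else 0 := by
    intro a ha
    have hxa := Finsupp.mem_support_iff.mp ha
    by_cases hae : a = e
    · subst hae
      rw [if_pos rfl]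
      rw [Finset.sum_eq_single a]
      · rw [if_pos (SemilatticeWithZero.mul_idem a)]
      · intro b hb hba
        rw [if_neg]
        intro hab
        exact hba (key a hxa b (Finsupp.mem_support_iff.mp hb) hab).2
      · intro h
        rw [Finsupp.notMem_support_iff.mp h, mul_zero]
        simp
    · rw [if_neg hae]
      apply Finset.sum_eq_zero
      intro b hb
      rw [if_neg]
      intro hab
      exact hae (key a hxa b (Finsupp.mem_support_iff.mp hb) hab).1
  rw [Finset.sum_congr rfl main, Finset.sum_ite_eq' (x : MonoidAlgebra ℤ E).coeff.support e
    (fun _ => (x : MonoidAlgebra ℤ E).coeff e * (y : MonoidAlgebra ℤ E).coeff e)]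
  by_cases h : e ∈ (x : MonoidAlgebra ℤ E).coeff.support
  · rw [if_pos h]
  · rw [if_neg h, Finsupp.notMem_support_iff.mp h, zero_mul]

lemma elt_mul_of_SB {e : E} (he : e ≠ 0) {x : ZE E} (hx : SB e x) : elt e * x = x := by
  apply Subtype.ext
  show T (((elt e : ZE E) : MonoidAlgebra ℤ E) * (x : MonoidAlgebra ℤ E)) = (x : MonoidAlgebra ℤ E)
  rw [elt_val he, MonoidAlgebra.mul_def, MonoidAlgebra.coeff_single, Finsupp.sum_single_index (by simp)]
  have hsum : ((x : MonoidAlgebra ℤ E).coeff.sum fun a₂ b₂ => MonoidAlgebra.single (e * a₂) ((1 : ℤ) * b₂))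
      = ((x : MonoidAlgebra ℤ E).coeff.sum fun a₂ b₂ => MonoidAlgebra.single a₂ b₂) := by
    apply Finsupp.sum_congr
    intro a ha
    have hae : a * e = a := hx a (Finsupp.mem_support_iff.mp ha)
    rw [one_mul, mul_comm e a, hae]
  rw [hsum, MonoidAlgebra.sum_coeff_single]
  exact T_eq_self x.2

lemma join_insert {a : E} {R : Finset E} (ha : a ∉ R) :
    join (insert a R) (fun f => f)
      = elt a + join R (fun f => f) - elt a * join R (fun f => f) :=
  rjoin_insert ha _

lemma join_empty : join (∅ : Finset E) (fun f => f) = 0 := rjoin_empty _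

lemma SB_join {e : E} : ∀ R : Finset E, (∀ f ∈ R, f * e = f) → SB e (join R (fun f => f)) := by
  intro R
  induction R using Finset.induction_on with
  | empty =>
    intro _
    rw [join_empty]
    exact SB_zero e
  | @insert a R ha ih =>
    intro hW
    rw [join_insert ha]
    have h1 : SB e (elt a) := SB_elt (hW a (Finset.mem_insert_self a R))
    have h2 := ih (fun f hf => hW f (Finset.mem_insert_of_mem hf))
    exact SB_sub (SB_add h1 h2) (SB_mul h1 h2)

lemma val_sub_apply (x y : ZE E) (d : E) :
    ((x - y : ZE E) : MonoidAlgebra ℤ E).coeff d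
      = (x : MonoidAlgebra ℤ E).coeff d - (y : MonoidAlgebra ℤ E).coeff d := by
  have : ((x - y : ZE E) : MonoidAlgebra ℤ E)
      = (x : MonoidAlgebra ℤ E) - (y : MonoidAlgebra ℤ E) := rfl
  rw [this, MonoidAlgebra.coeff_sub, Finsupp.sub_apply]

lemma val_add_apply (x y : ZE E) (d : E) :
    ((x + y : ZE E) : MonoidAlgebra ℤ E).coeff d
      = (x : MonoidAlgebra ℤ E).coeff d + (y : MonoidAlgebra ℤ E).coeff d := by
  have : ((x + y : ZE E) : MonoidAlgebra ℤ E)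
      = (x : MonoidAlgebra ℤ E) + (y : MonoidAlgebra ℤ E) := rfl
  rw [this, MonoidAlgebra.coeff_add, Finsupp.add_apply]

lemma elt_val_apply_ne {a d : E} (had : a ≠ d) : ((elt a : ZE E) : MonoidAlgebra ℤ E).coeff d = 0 := by
  by_cases ha : a = 0
  · subst ha; rw [elt_zero]; rfl
  · rw [elt_val ha, MonoidAlgebra.coeff_single, Finsupp.single_apply, if_neg had]

lemma join_val_e {e : E} (he : e ≠ 0) : ∀ R : Finset E, (∀ f ∈ R, f * e = f) → e ∉ R →
    ((join R (fun f => f) : ZE E) : MonoidAlgebra ℤ E).coeff e = 0 := by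
  intro R
  induction R using Finset.induction_on with
  | empty =>
    intro _ _
    rw [join_empty]
    rfl
  | @insert a R ha ih =>
    intro hW heR
    have hane : a ≠ e := fun h => heR (h ▸ Finset.mem_insert_self a R)
    have hWR : ∀ f ∈ R, f * e = f := fun f hf => hW f (Finset.mem_insert_of_mem hf)
    have ha' : a * e = a := hW a (Finset.mem_insert_self a R)
    have hmul : ((elt a * join R (fun f => f) : ZE E) : MonoidAlgebra ℤ E).coeff e = 0 := by
      rw [val_e_mul he (SB_elt ha') (SB_join R hWR),
        ih hWR (fun h => heR (Finset.mem_insert_of_mem h)), mul_zero]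
    rw [join_insert ha, val_sub_apply, val_add_apply, hmul, sub_zero,
      elt_val_apply_ne hane, zero_add]
    exact ih hWR (fun h => heR (Finset.mem_insert_of_mem h))

lemma join_eq_elt_of_mem {e : E} (he : e ≠ 0) : ∀ R : Finset E, (∀ f ∈ R, f * e = f) →
    e ∈ R → join R (fun f => f) = elt e := by
  intro R
  induction R using Finset.induction_on with
  | empty =>
    intro _ h
    exact absurd h (Finset.notMem_empty e)
  | @insert a R ha ih =>
    intro hW heR
    have hWR : ∀ f ∈ R, f * e = f := fun f hf => hW f (Finset.mem_insert_of_mem hf)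
    rw [join_insert ha]
    rcases Finset.mem_insert.mp heR with h | h
    · subst h
      rw [elt_mul_of_SB he (SB_join R hWR)]
      exact add_sub_cancel_right _ _
    · rw [ih hWR h, elt_mul, hW a (Finset.mem_insert_self a R)]
      exact add_sub_cancel_left _ _

lemma eS_singleton (e : E) (R : Finset E) :
    eS e {R} = elt e - join R (fun f => f) :=
  nprod_singleton R _

lemma eS_insert {e : E} {R : Finset E} {S : Finset (Finset E)} (hR : R ∉ S) (hS : S.Nonempty) :
    eS e (insert R S) = (elt e - join R (fun f => f)) * eS e S :=
  nprod_insert hR hS _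

lemma eS_zero_of_mem {e : E} (he : e ≠ 0) {S : Finset (Finset E)} {R : Finset E} (hRS : R ∈ S)
    (hW : ∀ f ∈ R, f * e = f) (heR : e ∈ R) : eS e S = 0 :=
  nprod_eq_zero hRS (by rw [join_eq_elt_of_mem he R hW heR, sub_self])

lemma factor_SB {e : E} {R : Finset E} (hW : ∀ f ∈ R, f * e = f) :
    SB e (elt e - join R (fun f => f)) :=
  SB_sub (SB_elt (SemilatticeWithZero.mul_idem e)) (SB_join R hW)

lemma factor_val_e {e : E} (he : e ≠ 0) {R : Finset E} (hW : ∀ f ∈ R, f * e = f)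
    (heR : e ∉ R) : (((elt e - join R (fun f => f)) : ZE E) : MonoidAlgebra ℤ E).coeff e = 1 := by
  rw [val_sub_apply, join_val_e he R hW heR, sub_zero, elt_val he, MonoidAlgebra.coeff_single, Finsupp.single_apply,
    if_pos rfl]

lemma eS_SB_and_val {e : E} (he : e ≠ 0) : ∀ S : Finset (Finset E), S.Nonempty →
    (∀ R ∈ S, (∀ f ∈ R, f * e = f) ∧ e ∉ R) →
    SB e (eS e S) ∧ ((eS e S : ZE E) : MonoidAlgebra ℤ E).coeff e = 1 := by
  intro S
  induction S using Finset.induction_on with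
  | empty =>
    intro h _
    exact absurd h (by simp)
  | @insert R S hR ih =>
    intro _ hyp
    have hfac := hyp R (Finset.mem_insert_self R S)
    by_cases hS : S.Nonempty
    · have hrest := ih hS (fun R' hR' => hyp R' (Finset.mem_insert_of_mem hR'))
      rw [eS_insert hR hS]
      refine ⟨SB_mul (factor_SB hfac.1) hrest.1, ?_⟩
      rw [val_e_mul he (factor_SB hfac.1) hrest.1, hrest.2, factor_val_e he hfac.1 hfac.2,
        one_mul]
    · have hSempty : S = ∅ := Finset.not_nonempty_iff_eq_empty.mp hS
      subst hSempty
      rw [show eS e (insert R (∅ : Finset (Finset E))) = eS e {R} from rfl, eS_singleton]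
      exact ⟨factor_SB hfac.1, factor_val_e he hfac.1 hfac.2⟩

section ActAux

variable {Γ : Type} [Group Γ] [MulAction Γ E]

lemma act_val (h0 : ∀ g : Γ, g • (0 : E) = 0) (g : Γ) (x : ZE E) :
    ((act g x : ZE E) : MonoidAlgebra ℤ E)
      = MonoidAlgebra.ofCoeff (Finsupp.mapDomain (fun e : E => g • e) (x : MonoidAlgebra ℤ E).coeff) := by
  show T _ = _
  apply T_eq_self
  have h : (0 : E) = g • (0 : E) := (h0 g).symm
  conv_lhs => rw [h]
  rw [MonoidAlgebra.coeff_ofCoeff, Finsupp.mapDomain_apply (MulAction.injective g)]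
  exact x.2

end ActAux

/-- Every element of a cover at a higher level is dominated by the covered element. -/
lemma Wstep {Γ E E₁ : Type} [Group Γ] [SemilatticeWithZero E] [MulAction Γ E]
    [SemilatticeWithZero E₁] [MulAction Γ E₁]
    (ℛ : E → Set (Finset E)) (ℛ₁ : E₁ → Set (Finset E₁)) (θ : E₁ → ZE E)
    (hreal : Realizes (Γ := Γ) ℛ ℛ₁ θ) :
    ∀ e' : E₁, e' ≠ 0 → ∀ C ∈ ℛ₁ e', ∀ x ∈ C, x * e' = x := by
  obtain ⟨hinj, hrange, hz, hmul, hequiv, hcv⟩ := hreal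
  intro e' he' C hC x hx
  obtain ⟨e, S, Rt, he, hSne, hSsub, hRt, hRtS, hxeq, hCeq⟩ := (hcv e' he' C).mp hC
  have hθx : θ x ∈ RSR e S Rt := hCeq ▸ Finset.mem_image_of_mem θ hx
  have hsq : eS e S * eS e S = eS e S := by
    rw [← hxeq, ← hmul, SemilatticeWithZero.mul_idem, hxeq]
  apply hinj
  rw [hmul, hxeq]
  unfold RSR at hθx
  rcases Finset.mem_insert.mp hθx with h1 | h2
  · rw [h1, eS_insert hRtS hSne, mul_assoc, hsq, ← eS_insert hRtS hSne, ← h1]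
  · obtain ⟨-, h2'⟩ := Finset.mem_erase.mp h2
    obtain ⟨f, _, hfeq⟩ := Finset.mem_image.mp h2'
    rw [← hfeq, mul_assoc, hsq]

/-- Key step: a group element fixing a nonzero element at level `k+1` fixes a nonzero
element at level `k`. -/
lemma FixStep {Γ E E₁ : Type} [Group Γ] [SemilatticeWithZero E] [MulAction Γ E]
    [SemilatticeWithZero E₁] [MulAction Γ E₁]
    (ℛ : E → Set (Finset E)) (ℛ₁ : E₁ → Set (Finset E₁)) (θ : E₁ → ZE E)
    (hreal : Realizes (Γ := Γ) ℛ ℛ₁ θ)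
    (hW : ∀ e : E, e ≠ 0 → ∀ R ∈ ℛ e, ∀ f ∈ R, f * e = f)
    (hGa : IsGammaSL Γ E) :
    ∀ e' : E₁, e' ≠ 0 → ∀ g : Γ, g • e' = e' → ∃ e : E, e ≠ 0 ∧ g • e = e := by
  obtain ⟨hinj, hrange, hz, hmul, hequiv, hcv⟩ := hreal
  intro e' he' g hg
  have hθne : θ e' ≠ 0 := fun h => he' (hinj (by rw [h, hz]))
  have hmem : θ e' ∈ EER ℛ := hrange ▸ Set.mem_range_self e'
  rcases hmem with ⟨e, S, he, hSne, hSsub, hxeq⟩ | h0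
  · have hWS : ∀ R ∈ S, ∀ f ∈ R, f * e = f := fun R hR => hW e he R (hSsub hR)
    have heR : ∀ R ∈ S, e ∉ R := by
      intro R hR hmemR
      exact hθne (by rw [hxeq, eS_zero_of_mem he hR (hWS R hR) hmemR])
    obtain ⟨hSB, hval⟩ := eS_SB_and_val he S hSne (fun R hR => ⟨hWS R hR, heR R hR⟩)
    rw [← hxeq] at hSB hval
    have hfix : act g (θ e') = θ e' := by rw [← hequiv, hg]
    have hmapd : MonoidAlgebra.ofCoeff (Finsupp.mapDomain (fun d : E => g • d) ((θ e' : ZE E) : MonoidAlgebra ℤ E).coeff)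
        = ((θ e' : ZE E) : MonoidAlgebra ℤ E) := by
      rw [← act_val hGa.2 g (θ e')]
      exact congrArg _ hfix
    have hvg : ∀ d : E, ((θ e' : ZE E) : MonoidAlgebra ℤ E).coeff (g • d)
        = ((θ e' : ZE E) : MonoidAlgebra ℤ E).coeff d := by
      intro d
      conv_lhs => rw [← hmapd]
      exact Finsupp.mapDomain_apply (MulAction.injective g) _ d
    set b : ℕ → E := fun n => (g ^ n) • e with hb
    have hb0 : b 0 = e := by simp [hb]
    have hbsucc : ∀ n, b (n + 1) = g • b n := by
      intro n
      simp only [hb]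
      rw [pow_succ', mul_smul]
    have hvb : ∀ n, ((θ e' : ZE E) : MonoidAlgebra ℤ E).coeff (b n) ≠ 0 := by
      intro n
      induction n with
      | zero => rw [hb0, hval]; exact one_ne_zero
      | succ n ih => rw [hbsucc, hvg]; exact ih
    have hge : (g • e) * e = g • e := by
      have h1 := hvb 1
      rw [hbsucc 0, hb0] at h1
      exact hSB _ h1
    have hle : ∀ n, b (n + 1) * b n = b (n + 1) := by
      intro n
      have hcongr : (g ^ n) • ((g • e) * e) = (g ^ n) • (g • e) := congrArg _ hge
      rw [hGa.1] at hcongr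
      have hb1 : (g ^ n) • (g • e) = b (n + 1) := by
        rw [smul_smul, ← pow_succ]
      rw [hb1] at hcongr
      exact hcongr
    have key : ∀ i j : ℕ, i < j → b i = b j → ∃ m, 0 < m ∧ b m = e := by
      intro i j hij hbij
      refine ⟨j - i, Nat.sub_pos_of_lt hij, ?_⟩
      have hsmul : (g ^ i) • b (j - i) = (g ^ i) • e := by
        show (g ^ i) • ((g ^ (j - i)) • e) = (g ^ i) • e
        rw [smul_smul, ← pow_add, Nat.add_sub_cancel' hij.le]
        exact hbij.symm
      exact MulAction.injective (g ^ i) hsmul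
    obtain ⟨i, j, hij, hbij⟩ := Finite.exists_ne_map_eq_of_infinite
      (fun n : ℕ => (⟨b n, Finsupp.mem_support_iff.mpr (hvb n)⟩ :
        {d : E // d ∈ ((θ e' : ZE E) : MonoidAlgebra ℤ E).coeff.support}))
    have hbij' : b i = b j := congrArg Subtype.val hbij
    have hm : ∃ m, 0 < m ∧ b m = e := by
      rcases hij.lt_or_gt with hlt | hlt
      · exact key i j hlt hbij'
      · exact key j i hlt hbij'.symm
    obtain ⟨m, hmpos, hbm⟩ := hm
    have hchain : ∀ n, b (n + 1) * b 1 = b (n + 1) := by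
      intro n
      induction n with
      | zero => exact SemilatticeWithZero.mul_idem (b 1)
      | succ n ih =>
        calc b (n + 2) * b 1 = (b (n + 2) * b (n + 1)) * b 1 := by rw [hle (n + 1)]
        _ = b (n + 2) * (b (n + 1) * b 1) := mul_assoc _ _ _
        _ = b (n + 2) * b (n + 1) := by rw [ih]
        _ = b (n + 2) := hle (n + 1)
    obtain ⟨n, rfl⟩ : ∃ n, m = n + 1 := ⟨m - 1, (Nat.succ_pred_eq_of_pos hmpos).symm⟩
    have h1 : e * b 1 = e := by
      rw [← hbm]
      exact hchain n
    have h2 : b 1 * e = b 1 := by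
      have := hle 0
      rwa [hb0] at this
    have hfinal : b 1 = e := by
      calc b 1 = b 1 * e := h2.symm
      _ = e * b 1 := mul_comm _ _
      _ = e := h1
    refine ⟨e, he, ?_⟩
    have : g • e = b 1 := by rw [hbsucc 0, hb0]
    rw [this, hfinal]
  · exact absurd h0 hθne

end Aux

end IndRes

open IndRes

theorem statement_16 {Γ : Type} [Group Γ]
    (Ek : ℕ → Type) (i1 : ∀ k, SemilatticeWithZero (Ek k)) (i2 : ∀ k, MulAction Γ (Ek k))
    (hact : ∀ k, IsGammaSL Γ (Ek k))
    (ℛk : ∀ k, Ek k → Set (Finset (Ek k)))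
    (hcov : CovSystem (ℛk 0)) (h1 : CondI (ℛk 0)) (h2 : CondII (ℛk 0)) (h3 : CondIII Γ (ℛk 0))
    (θ : ∀ k, Ek (k + 1) → ZE (Ek k))
    (hreal : ∀ k, Realizes (Γ := Γ) (ℛk k) (ℛk (k + 1)) (θ k)) :
    (∀ (k : ℕ) (e' : Ek k), e' ≠ 0 → ∀ g : Γ, g • e' = e' →
      g ∈ Subgroup.closure {g : Γ | ∃ e : Ek 0, e ≠ 0 ∧ g • e = e}) ∧
    ((∀ (g : Γ) (e : Ek 0), e ≠ 0 → g • e = e → g = 1) →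
      ∀ (k : ℕ) (g : Γ) (e' : Ek k), e' ≠ 0 → g • e' = e' → g = 1) := by
  have hWall : ∀ k, ∀ e : Ek k, e ≠ 0 → ∀ R ∈ ℛk k e, ∀ f ∈ R, f * e = f := by
    intro k
    cases k with
    | zero =>
      intro e he R hR f hf
      exact ((hcov e he R hR).1 f hf).2
    | succ k =>
      intro e' he' C hC x hx
      exact Wstep (ℛk k) (ℛk (k + 1)) (θ k) (hreal k) e' he' C hC x hx
  have main : ∀ k (e' : Ek k), e' ≠ 0 → ∀ g : Γ, g • e' = e' →
      ∃ e0 : Ek 0, e0 ≠ 0 ∧ g • e0 = e0 := by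
    intro k
    induction k with
    | zero =>
      intro e' he' g hg
      exact ⟨e', he', hg⟩
    | succ k ih =>
      intro e' he' g hg
      obtain ⟨e, he, hge⟩ := FixStep (ℛk k) (ℛk (k + 1)) (θ k) (hreal k) (hWall k) (hact k)
        e' he' g hg
      exact ih e he g hge
  constructor
  · intro k e' he' g hg
    obtain ⟨e0, he0, hfix⟩ := main k e' he' g hg
    exact Subgroup.subset_closure ⟨e0, he0, hfix⟩
  · intro hfree k g e' he' hg
    obtain ⟨e0, he0, hfix⟩ := main k e' he' g hg
    exact hfree g e0 he0 hfix
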